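/- Let ω be a primitive n-th root of unity in a field F, let 1 ≤ r ≤ n, and let G be the r×n matrix consisting of r consecutive rows of the Fourier matrix F_n (rows a, a+1, ..., a+r-1 with indices mod n). Then every r×r submatrix of G (obtained by selecting any r distinct columns) is invertible; equivalently, the linear code generated by G is MDS with parameters (n, r, n-r+1). -/

import Mathlib

theorem fourier_consecutive_rows_MDS {F : Type*} [Field F] (n r a : ℕ) (hn : 0 < n)
    (hr : 1 ≤ r) (hrn : r ≤ n) (ω : F) (hω : orderOf ω = n)
    (G : Matrix (Fin r) (Fin n) F)
    (hG : G = (Matrix.of fun i j : Fin n => ω ^ (i.val * j.val)).submatrix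
        (fun i : Fin r => (⟨(a + i.val) % n, Nat.mod_lt _ hn⟩ : Fin n)) id) :
    ∀ c : Fin r → Fin n, Function.Injective c → (G.submatrix id c).det ≠ 0 := by
  intro c hc
  subst hG
  have hω0 : ω ≠ 0 := by
    intro h
    have h1 : ω ^ n = 1 := by rw [← hω]; exact pow_orderOf_eq_one ω
    rw [h, zero_pow hn.ne'] at h1
    exact zero_ne_one h1
  -- the column evaluation points
  set x : Fin r → F := fun j => ω ^ (c j : ℕ) with hx
  have hxinj : Function.Injective x := by
    intro i j hij
    apply hc
    -- wlog via cases on ≤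
    have key : ∀ i j : Fin r, (c i : ℕ) ≤ (c j : ℕ) → ω ^ (c i : ℕ) = ω ^ (c j : ℕ) → c i = c j := by
      intro i j hle he
      have : ω ^ ((c j : ℕ) - (c i : ℕ)) = 1 := by
        have := mul_right_cancel₀ (pow_ne_zero (c i : ℕ) hω0)
          (show ω ^ ((c j : ℕ) - (c i : ℕ)) * ω ^ (c i : ℕ) = 1 * ω ^ (c i : ℕ) by
            rw [← pow_add, Nat.sub_add_cancel hle, one_mul, he])
        exact this
      have hdvd : n ∣ (c j : ℕ) - (c i : ℕ) := by
        have h2 := orderOf_dvd_of_pow_eq_one this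
        rwa [hω] at h2
      have hlt : (c j : ℕ) - (c i : ℕ) < n := lt_of_le_of_lt (Nat.sub_le _ _) (c j).isLt
      have : (c j : ℕ) - (c i : ℕ) = 0 := Nat.eq_zero_of_dvd_of_lt hdvd hlt
      exact Fin.ext (Nat.le_antisymm hle (Nat.le_of_sub_eq_zero this))
    rcases le_total (c i : ℕ) (c j : ℕ) with h | h
    · exact key i j h hij
    · exact (key j i h hij.symm).symm
  -- rewrite the submatrix
  have hM : (((Matrix.of fun i j : Fin n => ω ^ (i.val * j.val)).submatrix
        (fun i : Fin r => (⟨(a + i.val) % n, Nat.mod_lt _ hn⟩ : Fin n)) id).submatrix id c)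
      = Matrix.of (fun i j => x j ^ a * x j ^ i.val) := by
    ext i j
    simp only [Matrix.submatrix_apply, Matrix.of_apply, id, hx]
    calc ω ^ ((a + i.val) % n * (c j).val)
        = (ω ^ ((a + i.val) % n)) ^ (c j).val := by rw [pow_mul]
      _ = (ω ^ (a + i.val)) ^ (c j).val := by
          have h3 := pow_mod_orderOf ω (a + i.val)
          rw [hω] at h3
          rw [h3]
      _ = (ω ^ (c j).val) ^ a * (ω ^ (c j).val) ^ i.val := by
          rw [← pow_mul, ← pow_mul, ← pow_mul, ← pow_add, Nat.mul_comm, Nat.mul_add]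
  rw [hM, Matrix.det_mul_row (fun j => x j ^ a) (fun i j : Fin r => x j ^ i.val)]
  have hmat : (fun i j : Fin r => x j ^ i.val) = Matrix.transpose (Matrix.vandermonde x) := by
    funext i j
    simp [Matrix.vandermonde, Matrix.transpose]
  rw [hmat, Matrix.det_transpose, Matrix.det_vandermonde]
  apply mul_ne_zero
  · exact Finset.prod_ne_zero_iff.mpr fun j _ => pow_ne_zero _ (pow_ne_zero _ hω0)
  · apply Finset.prod_ne_zero_iff.mpr
    intro i _
    apply Finset.prod_ne_zero_iff.mpr
    intro j hj
    rw [Finset.mem_Ioi] at hj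
    exact sub_ne_zero.mpr fun h => (ne_of_lt hj) (hxinj h).symm
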